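/- Let d, t ≥ 0 and let Z be a chi-squared random variable with d degrees of freedom (i.e., the squared Euclidean norm of a standard Gaussian vector in R^d). Then P[Z ≥ d - 2√(d t)] ≥ 1 - e^{-t}. -/

import Mathlib

open MeasureTheory ProbabilityTheory
open scoped NNReal ENNReal Real


-- key log inequality
lemma key_log {x : ℝ} (hx0 : 0 ≤ x) (hx1 : x < 1) : Real.log (1 - x) ≤ -x - x^2/2 := by
  set f : ℝ → ℝ := fun y => Real.log (1 - y) + y + y^2/2 with hf
  have hderiv : ∀ y ∈ Set.Ico (0:ℝ) 1, HasDerivAt f ((1 - y)⁻¹ * (-1) + 1 + y) y := by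
    intro y hy
    have h1 : (1:ℝ) - y ≠ 0 := by simp at hy; nlinarith [hy.2]
    have hlog : HasDerivAt (fun y : ℝ => Real.log (1 - y)) ((1 - y)⁻¹ * (-1)) y := by
      have := ((Real.hasDerivAt_log h1).comp y (((hasDerivAt_id y).const_sub 1)))
      simpa [Function.comp_def] using this
    have hsq : HasDerivAt (fun y : ℝ => y^2/2) y y := by
      have := ((hasDerivAt_pow 2 y).div_const 2)
      simpa using this
    exact (hlog.add (hasDerivAt_id y)).add hsq
  have hanti : AntitoneOn f (Set.Icc 0 x) := by
    apply antitoneOn_of_deriv_nonpos (convex_Icc 0 x)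
    · apply ContinuousOn.mono (s := Set.Ico (0:ℝ) 1)
      · intro y hy
        exact ((hderiv y hy).continuousAt).continuousWithinAt
      · intro y hy; exact ⟨hy.1, lt_of_le_of_lt hy.2 hx1⟩
    · intro y hy
      rw [interior_Icc] at hy
      exact ((hderiv y ⟨hy.1.le, lt_of_lt_of_le hy.2 hx1.le⟩).differentiableAt).differentiableWithinAt
    · intro y hy
      rw [interior_Icc] at hy
      have h01 : 0 < 1 - y := by nlinarith [hy.1, hy.2, hx1]
      rw [(hderiv y ⟨hy.1.le, lt_of_lt_of_le hy.2 hx1.le⟩).deriv]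
      rw [inv_mul_eq_div, div_add' _ _ _ h01.ne', div_add' _ _ _ h01.ne']
      apply div_nonpos_of_nonpos_of_nonneg _ h01.le
      nlinarith [sq_nonneg y, hy.1]
  have h0 : f x ≤ f 0 := hanti (Set.left_mem_Icc.2 hx0) (Set.right_mem_Icc.2 hx0) hx0
  simp only [hf] at h0
  norm_num at h0
  linarith

lemma chernoff_arith (n : ℕ) {t a : ℝ} (ht : 0 < t) (ha0 : 0 < a) (had : a < n)
    (hta : a^2 = 4*n*t) :
    Real.exp (a/(2*((n:ℝ)-a)) * ((n:ℝ)-a)) * ((Real.sqrt (1+2*(a/(2*((n:ℝ)-a)))))⁻¹)^n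
      ≤ Real.exp (-t) := by
  have hn : (0:ℝ) < n := lt_trans ha0 had
  have hna : (0:ℝ) < (n:ℝ) - a := by linarith
  have h1 : a/(2*((n:ℝ)-a)) * ((n:ℝ)-a) = a/2 := by field_simp
  have h2 : 1+2*(a/(2*((n:ℝ)-a))) = (n:ℝ)/((n:ℝ)-a) := by field_simp; ring
  set r : ℝ := (n:ℝ)/((n:ℝ)-a) with hr
  have hrpos : 0 < r := by positivity
  have hsr : Real.sqrt r = Real.exp (Real.log r / 2) := by
    rw [← Real.exp_log hrpos]
    rw [Real.sqrt_eq_cases]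
    left
    constructor
    · rw [← Real.exp_add]
      congr 1
      rw [Real.log_exp]
      ring
    · positivity
  rw [h1, h2, hsr, ← Real.exp_neg, ← Real.exp_nat_mul, ← Real.exp_add, Real.exp_le_exp]
  -- goal : a/2 + n * -(log r / 2) ≤ -t
  have hlogr : Real.log r = - Real.log (1 - a/(n:ℝ)) := by
    rw [hr, ← Real.log_inv]
    congr 1
    field_simp
  have hx0 : 0 ≤ a/(n:ℝ) := by positivity
  have hx1 : a/(n:ℝ) < 1 := by rw [div_lt_one hn]; exact had
  have hkey := key_log hx0 hx1
  have ht' : a^2/(4*(n:ℝ)) = t := by field_simp at hta ⊢; linarith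
  rw [hlogr]
  have h5 : a^2/(2*(n:ℝ)) = 2*t := by field_simp at ht' ⊢; linarith
  have h4 : (n:ℝ) * (-(a/(n:ℝ)) - (a/(n:ℝ))^2/2) = -a - 2*t := by
    rw [← h5]; field_simp
  have h6 := mul_le_mul_of_nonneg_left hkey hn.le
  rw [h4] at h6
  linarith

lemma gauss_sq_int {s : ℝ} (hs : s ≤ 0) :
    ∫ x, Real.exp (s * x^2) ∂(gaussianReal 0 1) = (Real.sqrt (1 - 2*s))⁻¹ := by
  have h12 : (0:ℝ) < 1 - 2*s := by linarith
  rw [gaussianReal_of_var_ne_zero 0 one_ne_zero]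
  have hd : (gaussianPDF 0 1) = fun x => ((Real.toNNReal (gaussianPDFReal 0 1 x) : ℝ≥0) : ℝ≥0∞) := by
    funext x; rfl
  rw [hd, integral_withDensity_eq_integral_smul ((measurable_gaussianPDFReal 0 1).real_toNNReal)]
  have : ∀ x : ℝ, (Real.toNNReal (gaussianPDFReal 0 1 x) : ℝ≥0) • Real.exp (s * x^2)
      = (Real.sqrt (2*π))⁻¹ * Real.exp (-(1/2 - s) * x^2) := by
    intro x
    rw [NNReal.smul_def, smul_eq_mul, Real.coe_toNNReal _ (gaussianPDFReal_nonneg 0 1 x)]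
    unfold gaussianPDFReal
    rw [mul_assoc, ← Real.exp_add]
    push_cast
    ring_nf
  simp_rw [this]
  rw [MeasureTheory.integral_const_mul, integral_gaussian]
  have hs2 : (0:ℝ) < 1/2 - s := by linarith
  have h2 : (1:ℝ) - 2*s = 2 * (1/2 - s) := by ring
  rw [h2, Real.sqrt_mul (by norm_num : (0:ℝ) ≤ 2) π,
    Real.sqrt_mul (by norm_num : (0:ℝ) ≤ 2) (1/2 - s),
    Real.sqrt_div Real.pi_pos.le]
  have hp : Real.sqrt π ≠ 0 := by positivity
  have h2' : Real.sqrt 2 ≠ 0 := by positivity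
  have hss : Real.sqrt (1/2 - s) ≠ 0 := by positivity
  field_simp

/-- Laurent–Massart lower-tail bound: if `Z` is the squared Euclidean norm of a
standard Gaussian vector in `ℝ^d` (i.e. chi-squared with `d` degrees of freedom),
then `P[Z ≥ d - 2√(dt)] ≥ 1 - e^{-t}`. -/
theorem stmt_0 {Ω : Type*} [MeasureSpace Ω] [IsProbabilityMeasure (ℙ : Measure Ω)]
    (d : ℕ) (Z : Ω → EuclideanSpace ℝ (Fin d)) (hZ : Measurable Z)
    (hindep : iIndepFun (fun i ω => Z ω i) ℙ)
    (hlaw : ∀ i : Fin d, Measure.map (fun ω => Z ω i) ℙ = gaussianReal 0 1)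
    (t : ℝ) (ht : 0 ≤ t) :
    1 - Real.exp (-t) ≤
      (ℙ {ω | (d : ℝ) - 2 * Real.sqrt (d * t) ≤ ‖Z ω‖ ^ 2}).toReal := by
  classical
  have hZi : ∀ i : Fin d, Measurable (fun ω => Z ω i) := fun i =>
    (measurable_pi_apply i).comp (Measurable.comp (WithLp.measurable_ofLp _ _) hZ)
  set Y : Fin d → Ω → ℝ := fun i ω => (Z ω i)^2 with hYdef
  have hYm : ∀ i, Measurable (Y i) := fun i => (hZi i).pow_const 2
  have hY_indep : iIndepFun Y ℙ :=
    hindep.comp (fun _ (x : ℝ) => x^2) (fun _ => measurable_id.pow_const 2)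
  have hnorm : ∀ ω, ‖Z ω‖^2 = (∑ i, Y i) ω := by
    intro ω
    rw [EuclideanSpace.norm_eq, Real.sq_sqrt (by positivity)]
    simp [hYdef, Real.norm_eq_abs, sq_abs]
  have hint : ∀ (s : ℝ), s ≤ 0 → ∀ i, Integrable (fun ω => Real.exp (s * Y i ω)) ℙ := by
    intro s hs i
    refine Integrable.mono' (integrable_const 1)
      (((hYm i).const_mul s).exp.aestronglyMeasurable) (ae_of_all _ fun ω => ?_)
    rw [Real.norm_eq_abs, abs_of_pos (Real.exp_pos _)]
    exact Real.exp_le_one_iff.2 (mul_nonpos_iff.2 (Or.inr ⟨hs, sq_nonneg _⟩))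
  have hmgf : ∀ (s : ℝ), s ≤ 0 → mgf (∑ i, Y i) ℙ s = ((Real.sqrt (1-2*s))⁻¹)^d := by
    intro s hs
    rw [iIndepFun.mgf_sum hY_indep hYm Finset.univ]
    have hone : ∀ i : Fin d, mgf (Y i) ℙ s = (Real.sqrt (1-2*s))⁻¹ := by
      intro i
      unfold mgf
      have hmap : ∫ ω, Real.exp (s * (Z ω i)^2) ∂ℙ
          = ∫ x, Real.exp (s * x^2) ∂(Measure.map (fun ω => Z ω i) ℙ) := by
        rw [integral_map (hZi i).aemeasurable]
        exact ((measurable_id.pow_const 2).const_mul s).exp.aestronglyMeasurable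
      simp only [hYdef]
      rw [hmap, hlaw i, gauss_sq_int hs]
    simp [hone, Finset.prod_const]
  set a : ℝ := 2 * Real.sqrt (d * t) with hadef
  have ha0 : 0 ≤ a := by positivity
  rcases le_or_gt ((d:ℝ) - a) 0 with hcase | hcase
  · have hset : {ω | (d : ℝ) - a ≤ ‖Z ω‖ ^ 2} = Set.univ :=
      Set.eq_univ_of_forall fun ω => le_trans hcase (by positivity)
    rw [hset, measure_univ, ENNReal.toReal_one]
    have := Real.exp_pos (-t)
    linarith
  · rcases eq_or_lt_of_le ht with rfl | ht0
    · simp only [neg_zero, Real.exp_zero, sub_self]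
      exact ENNReal.toReal_nonneg
    have hdpos : (0:ℝ) < d := lt_of_le_of_lt ha0 (by linarith)
    have hapos : 0 < a := by
      rw [hadef]; positivity
    have hta : a^2 = 4 * d * t := by
      rw [hadef, mul_pow, Real.sq_sqrt (by positivity)]; ring
    set l : ℝ := a / (2 * ((d:ℝ) - a)) with hldef
    have hl0 : 0 < l := by rw [hldef]; positivity
    have h_int : Integrable (fun ω => Real.exp (-l * (∑ i, Y i) ω)) ℙ :=
      iIndepFun.integrable_exp_mul_sum hY_indep hYm
        (fun i _ => hint (-l) (by linarith) i)
    have hcher := measure_le_le_exp_mul_mgf (X := ∑ i, Y i) (μ := ℙ)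
      ((d:ℝ) - a) (by linarith : -l ≤ 0) h_int
    rw [hmgf (-l) (by linarith)] at hcher
    have harith := chernoff_arith d ht0 hapos (by linarith) hta
    have hbound : (ℙ {ω | (∑ i, Y i) ω ≤ (d:ℝ) - a}).toReal ≤ Real.exp (-t) := by
      refine hcher.trans ?_
      have e1 : -(-l) * ((d:ℝ) - a) = a/(2*((d:ℝ)-a)) * ((d:ℝ)-a) := by
        rw [hldef]; ring
      have e2 : 1 - 2*(-l) = 1 + 2*(a/(2*((d:ℝ)-a))) := by rw [hldef]; ring
      rw [e1, e2]
      exact harith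
    -- complement argument
    have hSm : Measurable (∑ i, Y i) := by
      have h := Finset.measurable_sum (f := Y) Finset.univ (fun i _ => hYm i)
      have he : (∑ i, Y i) = fun ω => ∑ i, Y i ω := by
        funext ω; simp [Finset.sum_apply]
      rw [he]; exact h
    have hsetm : MeasurableSet {ω | (d : ℝ) - a ≤ ‖Z ω‖ ^ 2} := by
      have : {ω | (d : ℝ) - a ≤ ‖Z ω‖ ^ 2} = {ω | (d : ℝ) - a ≤ (∑ i, Y i) ω} := by
        ext ω; simp [hnorm ω]
      rw [this]
      exact measurableSet_le measurable_const hSm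
    have hcompl : (ℙ {ω | (d : ℝ) - a ≤ ‖Z ω‖ ^ 2}ᶜ).toReal
        ≤ (ℙ {ω | (∑ i, Y i) ω ≤ (d:ℝ) - a}).toReal := by
      apply ENNReal.toReal_mono (measure_ne_top _ _)
      apply measure_mono
      intro ω hω
      simp only [Set.mem_compl_iff, Set.mem_setOf_eq, not_le] at hω
      simp only [Set.mem_setOf_eq, ← hnorm ω]
      exact le_of_lt hω
    rw [prob_compl_eq_one_sub hsetm] at hcompl
    rw [ENNReal.toReal_sub_of_le (prob_le_one) (by simp), ENNReal.toReal_one] at hcompl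
    linarith [hcompl.trans hbound]
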